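/- Let V, W, A, B be finite-dimensional vector spaces over a field K with perfect bilinear pairings S : A ⊗ B → K, P : V ⊗ B → K, P' : W ⊗ A → K, and suppose there are isomorphisms φ : A → V and a pairing I : W ⊗ V → K such that (for all a ∈ A, b ∈ B) P(φ(a), b) = S(a, b) and (for all w ∈ W, a ∈ A) I(w, φ(a)) = P'(w, a). Then, in terms of matrices with respect to fixed bases, the transpose of I equals P ∘ S⁻¹ ∘ ᵗP', i.e. ᵗI = P · S⁻¹ · ᵗP'. -/

import Mathlib

/-!
Statement 0 (Corollary 2.7 of the paper, abstract quadratic relations):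
finite-dimensional `K`-vector spaces `V, W, A, B` with perfect bilinear pairings
`S : A ⊗ B → K`, `P : V ⊗ B → K`, `P' : W ⊗ A → K`, an isomorphism `φ : A ≃ V`
with `P (φ a) b = S a b`, and a pairing `I : W ⊗ V → K` with `I w (φ a) = P' w a`.
Then, for the matrices with respect to fixed bases, `ᵗI = P · S⁻¹ · ᵗP'`.
-/

open Matrix

theorem quadratic_relation_transpose_intersection_eq
    (K : Type*) [Field K]
    (V W A B : Type*)
    [AddCommGroup V] [Module K V] [AddCommGroup W] [Module K W]
    [AddCommGroup A] [Module K A] [AddCommGroup B] [Module K B]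
    [FiniteDimensional K V] [FiniteDimensional K W]
    [FiniteDimensional K A] [FiniteDimensional K B]
    (n : Type*) [Fintype n] [DecidableEq n]
    (bV : Module.Basis n K V) (bW : Module.Basis n K W) (bA : Module.Basis n K A) (bB : Module.Basis n K B)
    (S : A →ₗ[K] B →ₗ[K] K) (P : V →ₗ[K] B →ₗ[K] K)
    (P' : W →ₗ[K] A →ₗ[K] K) (I : W →ₗ[K] V →ₗ[K] K)
    -- the pairings `S`, `P`, `P'` are perfect
    (hSperf : Function.Bijective (S : A → B →ₗ[K] K))
    (hPperf : Function.Bijective (P : V → B →ₗ[K] K))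
    (hP'perf : Function.Bijective (P' : W → A →ₗ[K] K))
    (φ : A ≃ₗ[K] V)
    (hP : ∀ (a : A) (b : B), P (φ a) b = S a b)
    (hI : ∀ (w : W) (a : A), I w (φ a) = P' w a) :
    (Matrix.of fun i j => I (bW i) (bV j))ᵀ =
      (Matrix.of fun i j => P (bV i) (bB j)) *
        (Matrix.of fun i j => S (bA i) (bB j))⁻¹ *
        (Matrix.of fun i j => P' (bW i) (bA j))ᵀ := by
  set Imat : Matrix n n K := Matrix.of fun i j => I (bW i) (bV j) with hImat
  set Pmat : Matrix n n K := Matrix.of fun i j => P (bV i) (bB j) with hPmat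
  set Smat : Matrix n n K := Matrix.of fun i j => S (bA i) (bB j) with hSmat
  set P'mat : Matrix n n K := Matrix.of fun i j => P' (bW i) (bA j) with hP'mat
  set Cmat : Matrix n n K := Matrix.of fun i k => bV.repr (φ (bA i)) k with hCmat
  -- Smat = Cmat * Pmat
  have hS_eq : Smat = Cmat * Pmat := by
    ext i j
    rw [Matrix.mul_apply]
    have : S (bA i) (bB j) = P (φ (bA i)) (bB j) := (hP _ _).symm
    rw [hSmat, Matrix.of_apply, this, ← bV.sum_repr (φ (bA i)), map_sum,
      LinearMap.sum_apply]
    simp [hCmat, hPmat, mul_comm]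
  -- P'mat = Imat * Cmatᵀ
  have hP'_eq : P'mat = Imat * Cmatᵀ := by
    ext i j
    rw [Matrix.mul_apply]
    have : P' (bW i) (bA j) = I (bW i) (φ (bA j)) := (hI _ _).symm
    rw [hP'mat, Matrix.of_apply, this, ← bV.sum_repr (φ (bA j)), map_sum]
    simp [hImat, hCmat, mul_comm]
  -- Cmat is invertible
  have hCdet : IsUnit Cmat.det := by
    have : Cmat = (LinearMap.toMatrix bA bV φ.toLinearMap)ᵀ := by
      ext i k
      simp [hCmat, LinearMap.toMatrix_apply]
    rw [this, Matrix.det_transpose]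
    exact φ.isUnit_det bA bV
  -- Smat is invertible
  have hSdet : Smat.det ≠ 0 := by
    intro h
    obtain ⟨v, hv, hvS⟩ := (Matrix.exists_vecMul_eq_zero_iff).mpr h
    apply hv
    have hzero : ∀ j, S (∑ i, v i • bA i) (bB j) = 0 := by
      intro j
      have h1 : S (∑ i, v i • bA i) (bB j) = (v ᵥ* Smat) j := by
        simp [Matrix.vecMul, dotProduct, hSmat, map_sum,
          LinearMap.sum_apply]
      rw [h1, hvS, Pi.zero_apply]
    have ha : S (∑ i, v i • bA i) = 0 :=
      bB.ext fun j => by simpa using hzero j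
    have hsum : (∑ i, v i • bA i) = 0 := by
      apply hSperf.injective
      rw [ha, map_zero]
    have := Fintype.linearIndependent_iff.mp bA.linearIndependent v hsum
    funext i; exact this i
  have hSdetu : IsUnit Smat.det := isUnit_iff_ne_zero.mpr hSdet
  -- Pmat is invertible
  have hPdet : IsUnit Pmat.det := by
    have : Smat.det = Cmat.det * Pmat.det := by rw [hS_eq, Matrix.det_mul]
    rw [this] at hSdetu
    exact (isUnit_of_mul_isUnit_right hSdetu)
  -- conclude
  rw [hS_eq, hP'_eq, Matrix.transpose_mul, Matrix.transpose_transpose,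
    Matrix.mul_inv_rev]
  calc Imatᵀ = (Pmat * Pmat⁻¹) * (Cmat⁻¹ * Cmat) * Imatᵀ := by
        rw [Matrix.mul_nonsing_inv _ hPdet, Matrix.nonsing_inv_mul _ hCdet,
          Matrix.one_mul, Matrix.one_mul]
    _ = Pmat * (Pmat⁻¹ * Cmat⁻¹) * (Cmat * Imatᵀ) := by
        simp only [Matrix.mul_assoc]
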